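/- Let f(x) = x·(2^(β/x) − 1) with β > 0, and suppose 0 < ρ₁ < ρ₂, 0 < b₁ ≤ b₂, and ρ₁·f'(b₁) = ρ₂·f'(b₂) (the first-order optimality condition). Then ρ₁·f(b₁) ≤ ρ₂·f(b₂). -/

import Mathlib

open Real Set

noncomputable def Fc (c : ℝ) : ℝ → ℝ := fun x => x * (Real.exp (c / x) - 1)
noncomputable def Gc (c : ℝ) : ℝ → ℝ :=
  fun x => Real.exp (c / x) - 1 - (c / x) * Real.exp (c / x)

lemma q_hasDeriv (t : ℝ) :
    HasDerivAt (fun t => Real.exp t * (2 * t - 1) + 2 - 2 * t - t ^ 2 - Real.exp (-t))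
      (Real.exp t * (2 * t + 1) + Real.exp (-t) - 2 - 2 * t) t := by
  have h1 : HasDerivAt (fun t : ℝ => Real.exp t * (2 * t - 1))
      (Real.exp t * (2 * t - 1) + Real.exp t * 2) t := by
    simpa using (Real.hasDerivAt_exp t).fun_mul ((hasDerivAt_id t).const_mul 2 |>.sub_const 1)
  have h2 : HasDerivAt (fun t : ℝ => Real.exp (-t)) (-Real.exp (-t)) t := by
    simpa using (hasDerivAt_neg t).exp
  have := ((((h1.add_const 2).sub ((hasDerivAt_id t).const_mul 2)).sub
      (hasDerivAt_pow 2 t)).sub h2)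
  refine this.congr_deriv (Eq.symm ?_)
  ring

lemma q_pos {t : ℝ} (ht : 0 < t) :
    0 < Real.exp t * (2 * t - 1) + 2 - 2 * t - t ^ 2 - Real.exp (-t) := by
  have hmono : StrictMonoOn
      (fun t => Real.exp t * (2 * t - 1) + 2 - 2 * t - t ^ 2 - Real.exp (-t)) (Ici 0) := by
    apply strictMonoOn_of_deriv_pos (convex_Ici 0)
    · exact fun x _ => ((q_hasDeriv x).continuousAt).continuousWithinAt
    · intro x hx
      rw [interior_Ici] at hx
      have hx' : 0 < x := mem_Ioi.mp hx
      rw [(q_hasDeriv x).deriv]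
      have h1 : x + 1 < Real.exp x := Real.add_one_lt_exp (ne_of_gt hx')
      have h2 : -x + 1 < Real.exp (-x) :=
        Real.add_one_lt_exp (neg_ne_zero.mpr (ne_of_gt hx'))
      nlinarith [mul_lt_mul_of_pos_right h1 (show (0:ℝ) < 2 * x + 1 by linarith)]
  have h := hmono self_mem_Ici (le_of_lt ht) ht
  simp only [Real.exp_zero, neg_zero] at h
  linarith

lemma key_ineq {t : ℝ} (ht : 0 < t) :
    (Real.exp t - 1 - t * Real.exp t) ^ 2 < t ^ 2 * Real.exp t * (Real.exp t - 1) := by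
  have hq := q_pos ht
  have h1 : Real.exp (-t) * Real.exp t = 1 := by
    rw [← Real.exp_add]; simp
  nlinarith [mul_pos (Real.exp_pos t) hq, h1]

lemma Gc_neg {c x : ℝ} (hc : 0 < c) (hx : 0 < x) : Gc c x < 0 := by
  set t := c / x with htdef
  have ht : 0 < t := div_pos hc hx
  have h2 : -t + 1 < Real.exp (-t) := Real.add_one_lt_exp (by linarith : -t ≠ 0)
  have h1 : Real.exp (-t) * Real.exp t = 1 := by rw [← Real.exp_add]; simp
  have hE := Real.exp_pos t
  show Real.exp t - 1 - t * Real.exp t < 0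
  nlinarith [mul_lt_mul_of_pos_right h2 hE]

lemma inv_c_hasDeriv {c x : ℝ} (hx : 0 < x) :
    HasDerivAt (fun x : ℝ => c / x) (-(c / x ^ 2)) x := by
  have h := (hasDerivAt_inv (ne_of_gt hx)).const_mul c
  simp only [div_eq_mul_inv]
  refine h.congr_deriv (Eq.symm ?_)
  ring

lemma Fc_hasDeriv {c x : ℝ} (hx : 0 < x) : HasDerivAt (Fc c) (Gc c x) x := by
  have h2 : HasDerivAt (fun x : ℝ => Real.exp (c / x))
      (Real.exp (c / x) * -(c / x ^ 2)) x := (inv_c_hasDeriv hx).exp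
  have := (hasDerivAt_id x).fun_mul (h2.sub_const 1)
  have hx0 := ne_of_gt hx
  refine this.congr_deriv (Eq.symm ?_)
  show Real.exp (c / x) - 1 - (c / x) * Real.exp (c / x) = _
  simp only [id]
  field_simp
  ring

lemma Gc_hasDeriv {c x : ℝ} (hx : 0 < x) :
    HasDerivAt (Gc c) (c ^ 2 / x ^ 3 * Real.exp (c / x)) x := by
  have h2 : HasDerivAt (fun x : ℝ => Real.exp (c / x))
      (Real.exp (c / x) * -(c / x ^ 2)) x := (inv_c_hasDeriv hx).exp
  have h3 := (inv_c_hasDeriv (c := c) hx).fun_mul h2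
  have h4 := (h2.sub_const 1).sub h3
  have hx0 := ne_of_gt hx
  have : Gc c = fun x => (Real.exp (c / x) - 1) - (c / x) * Real.exp (c / x) := rfl
  rw [this]
  refine h4.congr_deriv (Eq.symm ?_)
  field_simp
  ring

lemma phi_hasDeriv {c x : ℝ} (hc : 0 < c) (hx : 0 < x) :
    HasDerivAt (fun x => Fc c x / Gc c x)
      ((Gc c x * Gc c x - Fc c x * (c ^ 2 / x ^ 3 * Real.exp (c / x))) / (Gc c x) ^ 2) x :=
  (Fc_hasDeriv hx).div (Gc_hasDeriv hx) (ne_of_lt (Gc_neg hc hx))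

lemma phi_anti {c : ℝ} (hc : 0 < c) :
    StrictAntiOn (fun x => Fc c x / Gc c x) (Ioi 0) := by
  apply strictAntiOn_of_deriv_neg (convex_Ioi 0)
  · exact fun x hx => ((phi_hasDeriv hc hx).continuousAt).continuousWithinAt
  · intro x hx
    rw [interior_Ioi] at hx
    rw [(phi_hasDeriv hc hx).deriv]
    apply div_neg_of_neg_of_pos
    · set t := c / x with htdef
      have ht : 0 < t := div_pos hc hx
      have hkey := key_ineq ht
      have hx0 := ne_of_gt (show 0 < x from hx)
      have hFG : Fc c x * (c ^ 2 / x ^ 3 * Real.exp (c / x))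
          = t ^ 2 * Real.exp t * (Real.exp t - 1) := by
        show x * (Real.exp (c / x) - 1) * (c ^ 2 / x ^ 3 * Real.exp (c / x)) = _
        rw [htdef]
        field_simp
      have hGG : Gc c x * Gc c x = (Real.exp t - 1 - t * Real.exp t) ^ 2 := by
        have hG : Gc c x = Real.exp t - 1 - t * Real.exp t := by rw [htdef]; rfl
        rw [hG]; ring
      rw [hFG, hGG]
      linarith
    · exact pow_two_pos_of_ne_zero (ne_of_lt (Gc_neg hc hx))

theorem first_order_condition_implies (β : ℝ) (hβ : 0 < β)
    (ρ₁ ρ₂ b₁ b₂ : ℝ) (hρ₁ : 0 < ρ₁) (hρ : ρ₁ < ρ₂)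
    (hb₁ : 0 < b₁) (hb : b₁ ≤ b₂)
    (f : ℝ → ℝ) (hf : ∀ x : ℝ, f x = x * ((2 : ℝ) ^ (β / x) - 1))
    (hfoc : ρ₁ * deriv f b₁ = ρ₂ * deriv f b₂) :
    ρ₁ * f b₁ ≤ ρ₂ * f b₂ := by
  set c := β * Real.log 2 with hcdef
  have hc : 0 < c := mul_pos hβ (Real.log_pos one_lt_two)
  have hfF : f = Fc c := by
    funext x
    rw [hf, Fc]
    congr 2
    rw [Real.rpow_def_of_pos two_pos]
    congr 1
    rw [hcdef]; ring
  have hb₂ : 0 < b₂ := lt_of_lt_of_le hb₁ hb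
  have hd₁ : deriv f b₁ = Gc c b₁ := by rw [hfF]; exact (Fc_hasDeriv hb₁).deriv
  have hd₂ : deriv f b₂ = Gc c b₂ := by rw [hfF]; exact (Fc_hasDeriv hb₂).deriv
  rw [hd₁, hd₂] at hfoc
  have hG₁ := Gc_neg hc hb₁
  have hG₂ := Gc_neg hc hb₂
  rcases eq_or_lt_of_le hb with heq | hlt
  · exfalso
    rw [heq] at hfoc
    have : ρ₁ = ρ₂ := mul_right_cancel₀ (ne_of_lt hG₂) hfoc
    linarith
  · have hφ := phi_anti hc hb₁ (mem_Ioi.mpr hb₂) hlt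
    simp only at hφ
    have hF₁ : f b₁ = (Fc c b₁ / Gc c b₁) * Gc c b₁ := by
      rw [hfF, div_mul_cancel₀ _ (ne_of_lt hG₁)]
    have hF₂ : f b₂ = (Fc c b₂ / Gc c b₂) * Gc c b₂ := by
      rw [hfF, div_mul_cancel₀ _ (ne_of_lt hG₂)]
    have hneg : ρ₁ * Gc c b₁ < 0 := mul_neg_of_pos_of_neg hρ₁ hG₁
    calc ρ₁ * f b₁ = (ρ₁ * Gc c b₁) * (Fc c b₁ / Gc c b₁) := by rw [hF₁]; ring
    _ ≤ (ρ₁ * Gc c b₁) * (Fc c b₂ / Gc c b₂) := by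
        nlinarith [mul_pos (sub_pos.mpr hφ) (neg_pos.mpr hneg)]
    _ = (ρ₂ * Gc c b₂) * (Fc c b₂ / Gc c b₂) := by rw [hfoc]
    _ = ρ₂ * f b₂ := by rw [hF₂]; ring
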